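/- For an odd prime p and H, D ∈ ℤ/p such that t² − Ht − D has no root in ℤ/p, the conic C = {(x,y) ∈ ℤ/p × ℤ/p : x² + Hxy − Dy² = 1} has exactly p + 1 elements. -/

import Mathlib

/-- for an odd prime `p` and `H, D ∈ ℤ/p` such that `t² − Ht − D`
has no root in `ℤ/p`, the conic `C = {(x,y) : x² + Hxy − Dy² = 1}` has exactly
`p + 1` elements. -/
theorem conic_card (p : ℕ) (hp : p.Prime) (hodd : Odd p) (H D : ZMod p)
    (hirr : ∀ t : ZMod p, t ^ 2 - H * t - D ≠ 0) :
    Set.ncard {P : ZMod p × ZMod p | P.1 ^ 2 + H * P.1 * P.2 - D * P.2 ^ 2 = 1}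
      = p + 1 := by
  classical
  haveI : Fact p.Prime := ⟨hp⟩
  have hp2 : p ≠ 2 := by rintro rfl; simp [Nat.odd_iff] at hodd
  have h2 : (2 : ZMod p) ≠ 0 := by
    refine Ring.two_ne_zero ?_
    rwa [ZMod.ringChar_zmod_n]
  have hm1 : (-1 : ZMod p) ≠ 1 := by
    intro h
    exact h2 (by linear_combination -h)
  -- q t = t^2 + H t - D is never zero
  have hq : ∀ t : ZMod p, t ^ 2 + H * t - D ≠ 0 := by
    intro t h
    apply hirr (-t)
    ring_nf
    ring_nf at h
    linear_combination h
  set S : Set (ZMod p × ZMod p) :=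
    {P : ZMod p × ZMod p | P.1 ^ 2 + H * P.1 * P.2 - D * P.2 ^ 2 = 1} with hS
  -- the backward map
  set g : Option (ZMod p) → ZMod p × ZMod p := fun o =>
    o.elim (1, 0) (fun t =>
      if t = -H / 2 then (-1, 0)
      else (1 + t * (-(2 * t + H) / (t ^ 2 + H * t - D)),
            -(2 * t + H) / (t ^ 2 + H * t - D))) with hg
  have hgS : ∀ o, g o ∈ S := by
    rintro (_ | t)
    · simp [hg, hS]
    · by_cases ht : t = -H / 2
      · simp [hg, hS, ht]
      · simp only [hg, hS, Option.elim, if_neg ht, Set.mem_setOf_eq]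
        set s : ZMod p := -(2 * t + H) / (t ^ 2 + H * t - D) with hsdef
        have hqt := hq t
        have hmul : s * (t ^ 2 + H * t - D) = -(2 * t + H) := by
          rw [hsdef]; exact div_mul_cancel₀ _ hqt
        linear_combination s * hmul
  -- the forward map
  set f : ZMod p × ZMod p → Option (ZMod p) := fun P =>
    if P.2 = 0 then (if P.1 = 1 then none else some (-H / 2))
    else some ((P.1 - 1) / P.2) with hf
  have left : ∀ P ∈ S, g (f P) = P := by
    rintro ⟨x, y⟩ hP
    simp only [hS, Set.mem_setOf_eq] at hP
    by_cases hy : y = 0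
    · subst hy
      by_cases hx : x = 1
      · simp [hf, hg, hx]
      · have hx' : x = -1 := by
          have : (x - 1) * (x + 1) = 0 := by linear_combination hP
          rcases mul_eq_zero.mp this with h | h
          · exact absurd (by linear_combination h) hx
          · linear_combination h
        subst hx'
        simp [hf, hg, if_neg hm1]
    · -- slope t = (x-1)/y; first show t ≠ -H/2
      have ht : (x - 1) / y ≠ -H / 2 := by
        intro h
        have h' : 2 * (x - 1) = -H * y := by
          field_simp at h
          linear_combination h
        have hy2 : y ^ 2 * (H ^ 2 + 4 * D) = 0 := by
          linear_combination (-4 : ZMod p) * hP + (2 * x + H * y + 2) * h'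
        have hHD : H ^ 2 + 4 * D = 0 := by
          rcases mul_eq_zero.mp hy2 with h | h
          · exact absurd (pow_eq_zero_iff (by norm_num) |>.mp h) hy
          · exact h
        apply hq (-H / 2)
        field_simp
        linear_combination (-1 : ZMod p) * hHD
      simp only [hf, hg, if_neg hy, Option.elim, if_neg ht]
      set t : ZMod p := (x - 1) / y with htdef
      have hx1 : x = 1 + t * y := by rw [htdef, div_mul_cancel₀ _ hy]; ring
      have hqt : t ^ 2 + H * t - D ≠ 0 := hq t
      have hy' : y = -(2 * t + H) / (t ^ 2 + H * t - D) := by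
        rw [eq_div_iff hqt]
        have : y * (2 * t + H + y * (t ^ 2 + H * t - D)) = 0 := by
          rw [hx1] at hP
          linear_combination hP
        rcases mul_eq_zero.mp this with h | h
        · exact absurd h hy
        · linear_combination h
      rw [← hy', hx1]
  have right : ∀ o, f (g o) = o := by
    rintro (_ | t)
    · simp [hf, hg]
    · by_cases ht : t = -H / 2
      · simp [hf, hg, ht, if_neg hm1]
      · have h2t : 2 * t + H ≠ 0 := by
          intro h
          apply ht
          field_simp
          linear_combination h
        have hqt : t ^ 2 + H * t - D ≠ 0 := hq t
        set s : ZMod p := -(2 * t + H) / (t ^ 2 + H * t - D) with hsdef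
        have hs : s ≠ 0 := div_ne_zero (neg_ne_zero.mpr h2t) hqt
        have hts : (1 + t * s - 1) / s = t := by
          rw [show (1 : ZMod p) + t * s - 1 = t * s by ring]
          exact mul_div_cancel_right₀ t hs
        simp only [hf, hg, Option.elim, if_neg ht, ← hsdef, if_neg hs, hts]
  -- build the equivalence
  have e : S ≃ Option (ZMod p) :=
    { toFun := fun P => f P.1
      invFun := fun o => ⟨g o, hgS o⟩
      left_inv := fun P => Subtype.ext (left P.1 P.2)
      right_inv := fun o => right o }
  have hcard : Nat.card S = Nat.card (Option (ZMod p)) := Nat.card_congr e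
  rw [Nat.card_coe_set_eq] at hcard
  rw [hcard]
  simp [Nat.card_eq_fintype_card, ZMod.card]
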